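/- arXiv:1510.05272 — 3 statements merged into one kernel-verified Lean document; each statement's English description precedes it below -/
import Mathlib

section
/- Let (X,μ) be a finite measure space with L²(X,μ) separable, endowed with a right action β : X × S → X of a group S for which μ is quasi-invariant with densities j(·,s), let {a(·,s)}_{s∈S} be a 𝕋-valued scalar cocycle, let π_a be the associated unitary representation on H = L²(X,μ), and set S₀ := {s ∈ S : x.s = x for a.e. x ∈ X}. If the linear span of {a(·,s) : s ∈ S₀} is weak-* dense in L^∞(X,μ), then any bounded operator T ∈ B(H) satisfying Tπ_a(s) = π_a(s)T for all s ∈ S₀ is a multiplication operator: T = M_ψ for some ψ ∈ L^∞(X,μ). -/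
open MeasureTheory
open scoped ENNReal

/-- Let `(X,μ)` be a finite measure space with `L²(X,μ)` separable, endowed with a right
action `β` of a group `S` with quasi-invariant measure (densities `j(·,s)`), let `a(·,s)`
be a unit-circle-valued scalar cocycle and `π_a` the associated unitary representation on
`L²(X,μ)`, and let `S₀ = {s ∈ S : x.s = x for a.e. x}`. If the linear span of
`{a(·,s) : s ∈ S₀}` is weak-* dense in `L^∞(X,μ)` (expressed, via Hahn–Banach and the
duality `L^∞ = (L¹)^*`, as: every `ψ ∈ L¹(X,μ)` with `∫ a(·,s) ψ dμ = 0` for all `s ∈ S₀`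
vanishes a.e.), then every bounded operator `T` on `L²(X,μ)` commuting with `π_a(s)` for
all `s ∈ S₀` is a multiplication operator `M_ψ` for some `ψ ∈ L^∞(X,μ)`. -/
theorem stmt7 {X : Type*} [MeasurableSpace X] (μ : Measure X) [IsFiniteMeasure μ]
    [TopologicalSpace.SeparableSpace (Lp ℂ 2 μ)]
    {S : Type*} [Group S] (β : S → X → X)
    (hβmeas : ∀ s, Measurable (β s))
    (hβone : ∀ x, β 1 x = x)
    (hβmul : ∀ s₁ s₂ : S, ∀ x, β (s₁ * s₂) x = β s₂ (β s₁ x))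
    (j : X → S → ℝ)
    (hjmeas : ∀ s, Measurable fun x => j x s)
    (hjpos : ∀ s, ∀ᵐ x ∂μ, 0 < j x s)
    (hquasi : ∀ s, ∀ E : Set X, MeasurableSet E →
      μ (β s '' E) = ∫⁻ x in E, ENNReal.ofReal (j x s) ∂μ)
    (a : X → S → ℂ)
    (hameas : ∀ s, Measurable fun x => a x s)
    (haunit : ∀ s, ∀ᵐ x ∂μ, ‖a x s‖ = 1)
    (hacoc : ∀ s₁ s₂ : S, ∀ᵐ x ∂μ, a x (s₁ * s₂) = a x s₁ * a (β s₁ x) s₂)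
    (haone : ∀ᵐ x ∂μ, a x 1 = 1)
    (π : S → Lp ℂ 2 μ →L[ℂ] Lp ℂ 2 μ)
    (hπ : ∀ s (φ : Lp ℂ 2 μ), ⇑(π s φ) =ᵐ[μ]
      fun x => (Real.sqrt (j x s) : ℂ) * a x s * φ (β s x))
    -- weak-* density of the span of `{a(·,s) : s ∈ S₀}` in `L^∞(X,μ)`:
    (hdense : ∀ ψ : X → ℂ, Integrable ψ μ →
      (∀ s : S, (∀ᵐ x ∂μ, β s x = x) → ∫ x, a x s * ψ x ∂μ = 0) → ψ =ᵐ[μ] 0) :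
    ∀ T : Lp ℂ 2 μ →L[ℂ] Lp ℂ 2 μ,
      (∀ s : S, (∀ᵐ x ∂μ, β s x = x) → T.comp (π s) = (π s).comp T) →
      ∃ ψ : X → ℂ, MemLp ψ ⊤ μ ∧
        ∀ φ : Lp ℂ 2 μ, ⇑(T φ) =ᵐ[μ] fun x => ψ x * φ x := by
  intro T hT
  classical
  -- Step 1: for `s ∈ S₀` the density `j(·,s)` equals 1 a.e.
  have hj1 : ∀ s : S, (∀ᵐ x ∂μ, β s x = x) → ∀ᵐ x ∂μ, j x s = 1 := by
    intro s hs
    set Z := toMeasurable μ {x | ¬ β s x = x} with hZdef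
    have hZm : MeasurableSet Z := measurableSet_toMeasurable _ _
    have hZ0 : μ Z = 0 := by rw [measure_toMeasurable]; exact hs
    have himgZ : μ (β s '' Z) = 0 := by
      rw [hquasi s Z hZm, Measure.restrict_eq_zero.2 hZ0, lintegral_zero_measure]
    have key : ∀ E : Set X, MeasurableSet E →
        ∫⁻ x in E, ENNReal.ofReal (j x s) ∂μ = μ E := by
      intro E hE
      rw [← hquasi s E hE]
      apply le_antisymm
      · calc μ (β s '' E) ≤ μ (E ∪ β s '' Z) := by
              apply measure_mono
              rintro y ⟨x, hxE, rfl⟩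
              by_cases hx : x ∈ Z
              · exact Or.inr ⟨x, hx, rfl⟩
              · have : β s x = x := by
                  by_contra hc
                  exact hx (subset_toMeasurable μ _ hc)
                exact Or.inl (by rw [this]; exact hxE)
          _ ≤ μ E + μ (β s '' Z) := measure_union_le _ _
          _ = μ E := by rw [himgZ, add_zero]
      · calc μ E = μ (E \ Z) := (measure_diff_null hZ0).symm
          _ ≤ μ (β s '' E) := by
              apply measure_mono
              rintro x ⟨hxE, hxZ⟩
              have : β s x = x := by
                by_contra hc
                exact hxZ (subset_toMeasurable μ _ hc)
              exact ⟨x, hxE, this⟩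
    have hae : (fun x => ENNReal.ofReal (j x s)) =ᵐ[μ] fun _ => (1 : ℝ≥0∞) := by
      apply ae_eq_of_forall_setLIntegral_eq_of_sigmaFinite ((hjmeas s).ennreal_ofReal)
        measurable_const
      intro E hE _
      rw [key E hE, setLIntegral_one]
    filter_upwards [hae, hjpos s] with x hx _
    rwa [ENNReal.ofReal_eq_one] at hx
  -- Step 2: for `s ∈ S₀` the representation acts as multiplication by `a(·,s)`.
  have hπ0 : ∀ s : S, (∀ᵐ x ∂μ, β s x = x) → ∀ φ : Lp ℂ 2 μ,
      ⇑(π s φ) =ᵐ[μ] fun x => a x s * φ x := by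
    intro s hs φ
    filter_upwards [hπ s φ, hj1 s hs, hs] with x h1 h2 h3
    rw [h1, h2, h3]
    simp
  -- Step 3: define `ψ` via the adjoint of `T` applied to the constant function 1.
  set one2 : Lp ℂ 2 μ := MemLp.toLp (fun _ => (1 : ℂ)) (memLp_const 1) with hone2def
  have hone2coe : ⇑one2 =ᵐ[μ] fun _ => (1 : ℂ) := MemLp.coeFn_toLp _
  set ζ : Lp ℂ 2 μ := ContinuousLinearMap.adjoint T one2 with hζdef
  set ψ : X → ℂ := fun x => (starRingEnd ℂ) (ζ x) with hψdef
  have hψmeas : AEStronglyMeasurable ψ μ := by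
    rw [hψdef]
    exact continuous_star.comp_aestronglyMeasurable (Lp.aestronglyMeasurable ζ)
  -- Step 4: the multiplication identity.
  have hmain : ∀ φ : Lp ℂ 2 μ, ⇑(T φ) =ᵐ[μ] fun x => ψ x * φ x := by
    intro φ
    have hζφint : Integrable (fun x => ψ x * φ x) μ := by
      have := MeasureTheory.L2.integrable_inner (𝕜 := ℂ) ζ φ
      simpa [RCLike.inner_apply, hψdef, mul_comm] using this
    have hTφint : Integrable (⇑(T φ)) μ :=
      MemLp.integrable (by norm_num) (Lp.memLp (T φ))
    have hρint : Integrable (fun x => ψ x * φ x - (T φ) x) μ := hζφint.sub hTφint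
    have hzero : (fun x => ψ x * φ x - (T φ) x) =ᵐ[μ] 0 := by
      apply hdense _ hρint
      intro s hs
      have habd : ∀ᵐ x ∂μ, ‖a x s‖ ≤ 1 := (haunit s).mono fun x hx => hx.le
      have hi1 : Integrable (fun x => a x s * (ψ x * φ x)) μ :=
        hζφint.bdd_mul (hameas s).aestronglyMeasurable habd
      have hi2 : Integrable (fun x => a x s * (T φ) x) μ :=
        hTφint.bdd_mul (hameas s).aestronglyMeasurable habd
      have hsplit : ∫ x, a x s * (ψ x * φ x - (T φ) x) ∂μ
          = ∫ x, a x s * (ψ x * φ x) ∂μ - ∫ x, a x s * (T φ) x ∂μ := by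
        rw [← integral_sub hi1 hi2]
        congr 1
        funext x
        ring
      have hcomm : T (π s φ) = π s (T φ) := by
        have := congrArg (fun A : Lp ℂ 2 μ →L[ℂ] Lp ℂ 2 μ => A φ) (hT s hs)
        simpa using this
      have hinner : (inner ℂ ζ (π s φ) : ℂ) = inner ℂ one2 (π s (T φ)) := by
        rw [hζdef, ContinuousLinearMap.adjoint_inner_left, hcomm]
      have e1 : ∫ x, a x s * (ψ x * φ x) ∂μ = (inner ℂ ζ (π s φ) : ℂ) := by
        rw [MeasureTheory.L2.inner_def]
        apply integral_congr_ae
        filter_upwards [hπ0 s hs φ] with x hx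
        rw [RCLike.inner_apply, hx]
        simp [hψdef]
        ring
      have e2 : ∫ x, a x s * (T φ) x ∂μ = (inner ℂ one2 (π s (T φ)) : ℂ) := by
        rw [MeasureTheory.L2.inner_def]
        apply integral_congr_ae
        filter_upwards [hπ0 s hs (T φ), hone2coe] with x hx h1x
        rw [RCLike.inner_apply, hx, h1x]
        simp
      rw [hsplit, e1, e2, hinner, sub_self]
    filter_upwards [hzero] with x hx
    have : ψ x * φ x - (T φ) x = 0 := hx
    linear_combination -this
  -- Step 5: `ψ` is essentially bounded by `‖T‖`.
  have hbound : ∀ᵐ x ∂μ, ‖ψ x‖ ≤ ‖T‖ := by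
    set ψ' := hψmeas.mk ψ with hψ'def
    have hψ'eq : ψ =ᵐ[μ] ψ' := hψmeas.ae_eq_mk
    have hEnull : ∀ ε : ℝ, 0 < ε → μ {x | ‖T‖ + ε ≤ ‖ψ' x‖} = 0 := by
      intro ε hε
      set E := {x | ‖T‖ + ε ≤ ‖ψ' x‖} with hEdef
      have hEm : MeasurableSet E :=
        measurableSet_le measurable_const
          hψmeas.stronglyMeasurable_mk.norm.measurable
      by_contra hne
      have hmemE : MemLp (E.indicator fun _ => (1 : ℂ)) 2 μ :=
        memLp_indicator_const 2 hEm 1 (Or.inr (measure_ne_top μ E))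
      set φE := hmemE.toLp _ with hφEdef
      have hcoe : ⇑φE =ᵐ[μ] E.indicator fun _ => (1 : ℂ) := hmemE.coeFn_toLp
      have hTφE : ⇑(T φE) =ᵐ[μ] fun x => ψ x * (E.indicator (fun _ => (1 : ℂ)) x) := by
        filter_upwards [hmain φE, hcoe] with x h1 h2
        rw [h1, h2]
      have hlow : eLpNorm (E.indicator fun _ => ((‖T‖ + ε : ℝ) : ℂ)) 2 μ
          ≤ eLpNorm (⇑(T φE)) 2 μ := by
        apply eLpNorm_mono_ae
        filter_upwards [hTφE, hψ'eq] with x h1 h2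
        rw [h1]
        by_cases hx : x ∈ E
        · rw [Set.indicator_of_mem hx, Set.indicator_of_mem hx]
          have hx' : ‖T‖ + ε ≤ ‖ψ' x‖ := hx
          rw [mul_one, h2]
          simp only [Complex.norm_real, Real.norm_eq_abs]
          rw [abs_of_nonneg (by have := norm_nonneg T; linarith)]
          exact hx'
        · rw [Set.indicator_of_notMem hx, Set.indicator_of_notMem hx, mul_zero]
      have hup : eLpNorm (⇑(T φE)) 2 μ ≤ ENNReal.ofReal ‖T‖ * eLpNorm (⇑φE) 2 μ := by
        have h1 : ‖T φE‖ ≤ ‖T‖ * ‖φE‖ := T.le_opNorm φE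
        have h2 : eLpNorm (⇑(T φE)) 2 μ = ENNReal.ofReal ‖T φE‖ := by
          rw [Lp.norm_def, ENNReal.ofReal_toReal (Lp.eLpNorm_ne_top _)]
        rw [h2]
        calc ENNReal.ofReal ‖T φE‖ ≤ ENNReal.ofReal (‖T‖ * ‖φE‖) :=
              ENNReal.ofReal_le_ofReal h1
          _ = ENNReal.ofReal ‖T‖ * ENNReal.ofReal ‖φE‖ :=
              ENNReal.ofReal_mul (norm_nonneg T)
          _ = ENNReal.ofReal ‖T‖ * eLpNorm (⇑φE) 2 μ := by
              rw [Lp.norm_def, ENNReal.ofReal_toReal (Lp.eLpNorm_ne_top _)]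
      have hcoeE : eLpNorm (⇑φE) 2 μ = eLpNorm (E.indicator fun _ => (1 : ℂ)) 2 μ :=
        eLpNorm_congr_ae hcoe
      rw [hcoeE, eLpNorm_indicator_const hEm two_ne_zero ENNReal.ofNat_ne_top] at hup
      rw [eLpNorm_indicator_const hEm two_ne_zero ENNReal.ofNat_ne_top] at hlow
      have hchain := le_trans hlow hup
      set m : ℝ≥0∞ := μ E ^ (1 / (2 : ℝ≥0∞).toReal) with hmdef
      have hm0 : m ≠ 0 :=
        (ENNReal.rpow_pos (pos_iff_ne_zero.mpr hne) (measure_ne_top μ E)).ne'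
      have hmtop : m ≠ ∞ :=
        ENNReal.rpow_ne_top_of_nonneg (by positivity) (measure_ne_top μ E)
      have hnn : ‖((‖T‖ + ε : ℝ) : ℂ)‖ₑ = ENNReal.ofReal (‖T‖ + ε) := by
        rw [← Real.enorm_eq_ofReal (by have := norm_nonneg T; linarith)]
        exact congrArg ENNReal.ofNNReal (Complex.nnnorm_real _)
      have h1n : ‖(1 : ℂ)‖ₑ = 1 := by simp
      rw [hnn, h1n, one_mul] at hchain
      have : ENNReal.ofReal (‖T‖ + ε) ≤ ENNReal.ofReal ‖T‖ :=
        (ENNReal.mul_le_mul_iff_left hm0 hmtop).mp hchain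
      have := (ENNReal.ofReal_le_ofReal_iff (norm_nonneg T)).mp this
      linarith
    have hae' : ∀ᵐ x ∂μ, ‖ψ' x‖ ≤ ‖T‖ := by
      rw [ae_iff]
      apply measure_mono_null _
        (measure_iUnion_null (s := fun n : ℕ => {x | ‖T‖ + 1 / (n + 1 : ℝ) ≤ ‖ψ' x‖})
          fun n => hEnull _ (by positivity))
      intro x hx
      simp only [Set.mem_setOf_eq, not_le] at hx
      obtain ⟨n, hn⟩ := exists_nat_one_div_lt (show (0:ℝ) < ‖ψ' x‖ - ‖T‖ by linarith)
      refine Set.mem_iUnion.2 ⟨n, ?_⟩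
      simp only [Set.mem_setOf_eq]
      linarith
    filter_upwards [hψ'eq, hae'] with x h1 h2
    rw [h1]
    exact h2
  exact ⟨ψ, memLp_top_of_bound hψmeas ‖T‖ hbound, hmain⟩
end

section
/- Let (X,μ) be a finite measure space with L²(X,μ) separable, endowed with a right action β : X × S → X of a group S for which μ is quasi-invariant with densities j(·,s), let {a(·,s)}_{s∈S} be a 𝕋-valued scalar cocycle, let π_a be the associated unitary representation on H = L²(X,μ), and set S₀ := {s ∈ S : x.s = x for a.e. x ∈ X}. If the linear span of {a(·,s) : s ∈ S₀} is weak-* dense in L^∞(X,μ), then π_a is multiplicity-free: the commutant π_a(S)' = {T ∈ B(H) : Tπ_a(s) = π_a(s)T for all s ∈ S} is a commutative algebra. -/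
open MeasureTheory
open scoped ENNReal

/-- Let `(X,μ)` be a finite measure space with `L²(X,μ)` separable, endowed with a right
action `β` of a group `S` with quasi-invariant measure (densities `j(·,s)`), let `a(·,s)`
be a unit-circle-valued scalar cocycle and `π_a` the associated unitary representation on
`L²(X,μ)`, and let `S₀ = {s ∈ S : x.s = x for a.e. x}`. If the linear span of
`{a(·,s) : s ∈ S₀}` is weak-* dense in `L^∞(X,μ)` (expressed, via Hahn–Banach and the
duality `L^∞ = (L¹)^*`, as: every `ψ ∈ L¹(X,μ)` with `∫ a(·,s) ψ dμ = 0` for all `s ∈ S₀`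
vanishes a.e.), then the representation `π_a` is multiplicity-free: its commutant
`π_a(S)' = {T : Tπ_a(s) = π_a(s)T for all s ∈ S}` is a commutative algebra. -/
theorem stmt8 {X : Type*} [MeasurableSpace X] (μ : Measure X) [IsFiniteMeasure μ]
    [TopologicalSpace.SeparableSpace (Lp ℂ 2 μ)]
    {S : Type*} [Group S] (β : S → X → X)
    (hβmeas : ∀ s, Measurable (β s))
    (hβone : ∀ x, β 1 x = x)
    (hβmul : ∀ s₁ s₂ : S, ∀ x, β (s₁ * s₂) x = β s₂ (β s₁ x))
    (j : X → S → ℝ)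
    (hjmeas : ∀ s, Measurable fun x => j x s)
    (hjpos : ∀ s, ∀ᵐ x ∂μ, 0 < j x s)
    (hquasi : ∀ s, ∀ E : Set X, MeasurableSet E →
      μ (β s '' E) = ∫⁻ x in E, ENNReal.ofReal (j x s) ∂μ)
    (a : X → S → ℂ)
    (hameas : ∀ s, Measurable fun x => a x s)
    (haunit : ∀ s, ∀ᵐ x ∂μ, ‖a x s‖ = 1)
    (hacoc : ∀ s₁ s₂ : S, ∀ᵐ x ∂μ, a x (s₁ * s₂) = a x s₁ * a (β s₁ x) s₂)
    (haone : ∀ᵐ x ∂μ, a x 1 = 1)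
    (π : S → Lp ℂ 2 μ →L[ℂ] Lp ℂ 2 μ)
    (hπ : ∀ s (φ : Lp ℂ 2 μ), ⇑(π s φ) =ᵐ[μ]
      fun x => (Real.sqrt (j x s) : ℂ) * a x s * φ (β s x))
    -- weak-* density of the span of `{a(·,s) : s ∈ S₀}` in `L^∞(X,μ)`:
    (hdense : ∀ ψ : X → ℂ, Integrable ψ μ →
      (∀ s : S, (∀ᵐ x ∂μ, β s x = x) → ∫ x, a x s * ψ x ∂μ = 0) → ψ =ᵐ[μ] 0) :
    ∀ T₁ T₂ : Lp ℂ 2 μ →L[ℂ] Lp ℂ 2 μ,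
      (∀ s : S, T₁.comp (π s) = (π s).comp T₁) →
      (∀ s : S, T₂.comp (π s) = (π s).comp T₂) →
      T₁.comp T₂ = T₂.comp T₁ := by
  intro T₁ T₂ hT₁ hT₂
  classical
  -- Step 1: for `s` acting trivially a.e., the density is 1 a.e.
  have hj1 : ∀ s : S, (∀ᵐ x ∂μ, β s x = x) → ∀ᵐ x ∂μ, Real.sqrt (j x s) = 1 := by
    intro s hs
    obtain ⟨N, hNsub, hNmeas, hN0⟩ :=
      exists_measurable_superset_of_null (ae_iff.mp hs)
    have himgN : μ (β s '' N) = 0 := by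
      rw [hquasi s N hNmeas]
      exact setLIntegral_measure_zero _ _ hN0
    have hA : ∀ E : Set X, MeasurableSet E →
        ∫⁻ x in E, ENNReal.ofReal (j x s) ∂μ = μ E := by
      intro E hE
      rw [← hquasi s E hE]
      apply le_antisymm
      · have hsub : β s '' E ⊆ E ∪ β s '' N := by
          rintro y ⟨x, hxE, rfl⟩
          by_cases hx : x ∈ N
          · exact Or.inr ⟨x, hx, rfl⟩
          · have : β s x = x := by
              by_contra h
              exact hx (hNsub h)
            rw [this]; exact Or.inl hxE
        calc μ (β s '' E) ≤ μ (E ∪ β s '' N) := measure_mono hsub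
          _ ≤ μ E + μ (β s '' N) := measure_union_le _ _
          _ = μ E := by rw [himgN, add_zero]
      · have hsub : E \ N ⊆ β s '' E := by
          intro x hx
          have : β s x = x := by
            by_contra h
            exact hx.2 (hNsub h)
          exact ⟨x, hx.1, this⟩
        have hle : μ E ≤ μ (E \ N) + μ N := by
          refine le_trans (measure_mono (fun x hx => ?_)) (measure_union_le _ _)
          by_cases h : x ∈ N
          · exact Or.inr h
          · exact Or.inl ⟨hx, h⟩
        calc μ E ≤ μ (E \ N) + μ N := hle
          _ = μ (E \ N) := by rw [hN0, add_zero]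
          _ ≤ μ (β s '' E) := measure_mono hsub
    have hae : (fun x => ENNReal.ofReal (j x s)) =ᵐ[μ] fun _ => (1 : ℝ≥0∞) := by
      refine ae_eq_of_forall_setLIntegral_eq_of_sigmaFinite
        ((hjmeas s).ennreal_ofReal) measurable_const (fun E hE _ => ?_)
      rw [hA E hE]
      simp
    filter_upwards [hae] with x hx
    have : j x s = 1 := by
      have h1 : ENNReal.ofReal (j x s) = ENNReal.ofReal 1 := by
        simpa using hx
      by_contra h
      rcases lt_or_gt_of_ne h with hlt | hgt
      · have := ENNReal.ofReal_lt_ofReal_iff (by norm_num : (0:ℝ) < 1) |>.mpr hlt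
        rw [h1] at this; exact lt_irrefl _ this
      · have := ENNReal.ofReal_lt_ofReal_iff (lt_trans one_pos hgt) |>.mpr hgt
        rw [h1] at this; exact lt_irrefl _ this
    rw [this, Real.sqrt_one]
  -- Step 2: for such `s`, `π s` is multiplication by `a(·,s)`
  have hmul : ∀ s : S, (∀ᵐ x ∂μ, β s x = x) → ∀ u : Lp ℂ 2 μ,
      ⇑(π s u) =ᵐ[μ] fun x => a x s * u x := by
    intro s hs u
    filter_upwards [hπ s u, hj1 s hs, hs] with x h1 h2 h3
    rw [h1, h3, h2]
    simp
  -- the constant function 1 as an element of L²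
  set one : Lp ℂ 2 μ := (memLp_const (1 : ℂ)).toLp (fun _ => (1:ℂ)) with hone_def
  have hone : ⇑one =ᵐ[μ] fun _ => (1 : ℂ) := MemLp.coeFn_toLp _
  -- Step 3: any commuting operator is a multiplication operator
  have hkey : ∀ T : Lp ℂ 2 μ →L[ℂ] Lp ℂ 2 μ,
      (∀ s : S, T.comp (π s) = (π s).comp T) →
      ∀ u : Lp ℂ 2 μ, ⇑(T u) =ᵐ[μ]
        fun x => (starRingEnd ℂ) ((ContinuousLinearMap.adjoint T one) x) * u x := by
    intro T hT u
    have hrel : ∀ v : Lp ℂ 2 μ, ∀ᵐ x ∂μ,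
        (starRingEnd ℂ) (v x) * (T u) x
          = (starRingEnd ℂ) ((ContinuousLinearMap.adjoint T v) x) * u x := by
      intro v
      set w : Lp ℂ 2 μ := ContinuousLinearMap.adjoint T v with hw
      set ψ : X → ℂ := fun x =>
        (starRingEnd ℂ) (v x) * (T u) x - (starRingEnd ℂ) (w x) * u x with hψ
      have hint : Integrable ψ μ := by
        have h1 : Integrable (fun x => (starRingEnd ℂ) (v x) * (T u) x) μ := by
          simpa [RCLike.inner_apply, mul_comm] using L2.integrable_inner (𝕜 := ℂ) v (T u)
        have h2 : Integrable (fun x => (starRingEnd ℂ) (w x) * u x) μ := by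
          simpa [RCLike.inner_apply, mul_comm] using L2.integrable_inner (𝕜 := ℂ) w u
        exact h1.sub h2
      have hzero : ∀ s : S, (∀ᵐ x ∂μ, β s x = x) → ∫ x, a x s * ψ x ∂μ = 0 := by
        intro s hs
        have h1 : Integrable (fun x => a x s * ((starRingEnd ℂ) (v x) * (T u) x)) μ := by
          refine Integrable.bdd_mul (c := 1) ?_ ((hameas s).aestronglyMeasurable) ?_
          · simpa [RCLike.inner_apply, mul_comm] using L2.integrable_inner (𝕜 := ℂ) v (T u)
          · filter_upwards [haunit s] with x hx using le_of_eq hx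
        have h2 : Integrable (fun x => a x s * ((starRingEnd ℂ) (w x) * u x)) μ := by
          refine Integrable.bdd_mul (c := 1) ?_ ((hameas s).aestronglyMeasurable) ?_
          · simpa [RCLike.inner_apply, mul_comm] using L2.integrable_inner (𝕜 := ℂ) w u
          · filter_upwards [haunit s] with x hx using le_of_eq hx
        have hsplit : ∫ x, a x s * ψ x ∂μ
            = (∫ x, a x s * ((starRingEnd ℂ) (v x) * (T u) x) ∂μ)
              - ∫ x, a x s * ((starRingEnd ℂ) (w x) * u x) ∂μ := by
          rw [← integral_sub h1 h2]
          apply integral_congr_ae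
          filter_upwards with x
          simp [hψ]; ring
        have e1 : (∫ x, a x s * ((starRingEnd ℂ) (v x) * (T u) x) ∂μ)
            = @inner ℂ _ _ v (π s (T u)) := by
          rw [L2.inner_def]
          apply integral_congr_ae
          filter_upwards [hmul s hs (T u)] with x hx
          simp [RCLike.inner_apply, hx]; ring
        have e2 : (∫ x, a x s * ((starRingEnd ℂ) (w x) * u x) ∂μ)
            = @inner ℂ _ _ w (π s u) := by
          rw [L2.inner_def]
          apply integral_congr_ae
          filter_upwards [hmul s hs u] with x hx
          simp [RCLike.inner_apply, hx]; ring
        have e3 : @inner ℂ _ _ w (π s u) = @inner ℂ _ _ v (T (π s u)) := by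
          rw [hw]
          exact ContinuousLinearMap.adjoint_inner_left T (π s u) v
        have e4 : T (π s u) = π s (T u) := by
          have := congrArg (fun L : Lp ℂ 2 μ →L[ℂ] Lp ℂ 2 μ => L u) (hT s)
          simpa using this
        rw [hsplit, e1, e2, e3, e4, sub_self]
      have := hdense ψ hint hzero
      filter_upwards [this] with x hx
      have : ψ x = 0 := hx
      rw [hψ] at this
      linear_combination this
    filter_upwards [hrel one, hone] with x h1 h2
    rw [← h1, h2]
    simp
  -- Step 4: multiplication operators commute
  apply ContinuousLinearMap.ext
  intro u
  have h1 := hkey T₁ hT₁ (T₂ u)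
  have h2 := hkey T₂ hT₂ u
  have h3 := hkey T₂ hT₂ (T₁ u)
  have h4 := hkey T₁ hT₁ u
  show T₁ (T₂ u) = T₂ (T₁ u)
  apply Lp.ext
  filter_upwards [h1, h2, h3, h4] with x e1 e2 e3 e4
  rw [e1, e2, e3, e4]
  ring
end

section
/- Let (X,μ) be a finite measure space with L²(X,μ) separable, endowed with a right action β : X × S → X of a group S for which μ is quasi-invariant with densities j(·,s), let {a(·,s)}_{s∈S} be a 𝕋-valued scalar cocycle, let π_a be the associated unitary representation on H = L²(X,μ), and set S₀ := {s ∈ S : x.s = x for a.e. x ∈ X}. If the linear span of {a(·,s) : s ∈ S₀} is weak-* dense in L^∞(X,μ), then the following are equivalent: (i) the action of S on (X,μ) is ergodic; (ii) the representation π_a is irreducible (every T ∈ B(H) commuting with all π_a(s), s ∈ S, is a scalar multiple of the identity). -/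
open MeasureTheory
open scoped ENNReal symmDiff

section Aux

variable {X : Type*} [MeasurableSpace X] {μ : Measure X}
variable {S : Type*} [Group S] {β : S → X → X} {j : X → S → ℝ}

lemma beta_inv_apply (hβone : ∀ x, β 1 x = x)
    (hβmul : ∀ s₁ s₂ : S, ∀ x, β (s₁ * s₂) x = β s₂ (β s₁ x)) (s : S) (x : X) :
    β s (β s⁻¹ x) = x := by
  have := hβmul s⁻¹ s x
  rw [inv_mul_cancel, hβone] at this
  exact this.symm

lemma beta_image_eq_preimage (hβone : ∀ x, β 1 x = x)
    (hβmul : ∀ s₁ s₂ : S, ∀ x, β (s₁ * s₂) x = β s₂ (β s₁ x)) (s : S) (A : Set X) :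
    β s '' A = β s⁻¹ ⁻¹' A := by
  ext y
  constructor
  · rintro ⟨x, hx, rfl⟩
    have : β s⁻¹ (β s x) = x := by
      simpa using beta_inv_apply hβone hβmul s⁻¹ x
    simpa [Set.mem_preimage, this]
  · intro hy
    exact ⟨β s⁻¹ y, hy, beta_inv_apply hβone hβmul s y⟩

lemma null_preimage (hβone : ∀ x, β 1 x = x)
    (hβmul : ∀ s₁ s₂ : S, ∀ x, β (s₁ * s₂) x = β s₂ (β s₁ x))
    (hquasi : ∀ s, ∀ E : Set X, MeasurableSet E →
      μ (β s '' E) = ∫⁻ x in E, ENNReal.ofReal (j x s) ∂μ)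
    (s : S) {N : Set X} (hN : μ N = 0) : μ (β s ⁻¹' N) = 0 := by
  set M := toMeasurable μ N with hM
  have hMmeas : MeasurableSet M := measurableSet_toMeasurable μ N
  have hM0 : μ M = 0 := by rw [measure_toMeasurable]; exact hN
  have hsub : β s ⁻¹' N ⊆ β s ⁻¹' M := Set.preimage_mono (subset_toMeasurable μ N)
  have him : β s⁻¹ '' M = β s ⁻¹' M := by
    simpa using beta_image_eq_preimage hβone hβmul s⁻¹ M
  have : μ (β s ⁻¹' M) = 0 := by
    rw [← him, hquasi s⁻¹ M hMmeas, setLIntegral_measure_zero _ _ hM0]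
  exact measure_mono_null hsub this

lemma ae_comp_beta (hβone : ∀ x, β 1 x = x)
    (hβmul : ∀ s₁ s₂ : S, ∀ x, β (s₁ * s₂) x = β s₂ (β s₁ x))
    (hquasi : ∀ s, ∀ E : Set X, MeasurableSet E →
      μ (β s '' E) = ∫⁻ x in E, ENNReal.ofReal (j x s) ∂μ)
    (s : S) {P : X → Prop} (hP : ∀ᵐ x ∂μ, P x) : ∀ᵐ x ∂μ, P (β s x) := by
  have : μ {x | ¬ P x} = 0 := hP
  have h2 : μ (β s ⁻¹' {x | ¬ P x}) = 0 :=
    null_preimage hβone hβmul hquasi s this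
  exact h2

lemma constant_of_levels (μ : Measure X) [IsFiniteMeasure μ] (hμ : μ Set.univ ≠ 0)
    (u : X → ℝ) (h : ∀ q : ℝ, μ {x | u x < q} = 0 ∨ μ {x | u x < q}ᶜ = 0) :
    ∃ c : ℝ, ∀ᵐ x ∂μ, u x = c := by
  set s : Set ℝ := {q | μ {x | u x < q}ᶜ = 0} with hs
  have hup : ∀ {q q' : ℝ}, q ∈ s → q ≤ q' → q' ∈ s := by
    intro q q' hq hle
    exact measure_mono_null (fun x hx => fun hlt => hx (lt_of_lt_of_le hlt hle)) hq
  have hne : s.Nonempty := by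
    by_contra hcon
    have hall : ∀ n : ℕ, μ {x | u x < (n : ℝ)} = 0 := by
      intro n
      rcases h (n : ℝ) with h0 | h1
      · exact h0
      · exact absurd ⟨(n:ℝ), h1⟩ hcon
    have : μ Set.univ = 0 := by
      refine measure_mono_null (fun x _ => ?_) (measure_iUnion_null hall)
      rcases exists_nat_gt (u x) with ⟨n, hn⟩
      exact Set.mem_iUnion.2 ⟨n, hn⟩
    exact hμ this
  have hbdd : BddBelow s := by
    by_contra hcon
    rw [not_bddBelow_iff] at hcon
    have hall : ∀ n : ℕ, μ {x | u x < -(n : ℝ)}ᶜ = 0 := by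
      intro n
      rcases hcon (-(n:ℝ)) with ⟨q, hq, hlt⟩
      exact hup hq hlt.le
    have : μ Set.univ = 0 := by
      refine measure_mono_null (fun x _ => ?_) (measure_iUnion_null hall)
      rcases exists_nat_gt (-u x) with ⟨n, hn⟩
      refine Set.mem_iUnion.2 ⟨n, ?_⟩
      simp only [Set.mem_compl_iff, Set.mem_setOf_eq, not_lt]
      linarith
    exact hμ this
  set c := sInf s with hc
  have hlow : μ {x | u x < c} = 0 := by
    have hall : ∀ n : ℕ, μ {x | u x < c - 1/(n+1 : ℝ)} = 0 := by
      intro n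
      rcases h (c - 1/(n+1 : ℝ)) with h0 | h1
      · exact h0
      · exfalso
        have : c ≤ c - 1/(n+1:ℝ) := csInf_le hbdd h1
        have hpos : (0:ℝ) < 1/(n+1:ℝ) := by positivity
        linarith
    refine measure_mono_null (fun x hx => ?_) (measure_iUnion_null hall)
    simp only [Set.mem_setOf_eq] at hx
    rcases exists_nat_one_div_lt (sub_pos.2 hx) with ⟨n, hn⟩
    refine Set.mem_iUnion.2 ⟨n, ?_⟩
    simp only [Set.mem_setOf_eq]
    linarith
  have hhigh : μ {x | c < u x} = 0 := by
    have hall : ∀ n : ℕ, μ {x | u x < c + 1/(n+1 : ℝ)}ᶜ = 0 := by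
      intro n
      have hpos : (0:ℝ) < 1/(n+1:ℝ) := by positivity
      have : sInf s < c + 1/(n+1:ℝ) := by linarith
      rcases exists_lt_of_csInf_lt hne this with ⟨q, hq, hlt⟩
      exact hup hq hlt.le
    refine measure_mono_null (fun x hx => ?_) (measure_iUnion_null hall)
    simp only [Set.mem_setOf_eq] at hx
    rcases exists_nat_one_div_lt (sub_pos.2 hx) with ⟨n, hn⟩
    refine Set.mem_iUnion.2 ⟨n, ?_⟩
    simp only [Set.mem_compl_iff, Set.mem_setOf_eq, not_lt]
    linarith
  refine ⟨c, ?_⟩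
  have : μ ({x | u x < c} ∪ {x | c < u x}) = 0 :=
    measure_union_null hlow hhigh
  refine measure_mono_null (fun x hx => ?_) this
  simp only [Set.mem_setOf_eq, Set.mem_union]
  rcases lt_trichotomy (u x) c with h1 | h2 | h3
  · exact Or.inl h1
  · exact absurd h2 hx
  · exact Or.inr h3

end Aux
section MulOp

variable {X : Type*} [MeasurableSpace X] (μ : Measure X)

lemma memMul (g : X → ℂ) (hg : Measurable g) (hgb : ∀ᵐ x ∂μ, ‖g x‖ ≤ 1)
    (φ : Lp ℂ 2 μ) : MemLp (fun x => g x * φ x) 2 μ := by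
  refine MemLp.of_le (Lp.memLp φ) (hg.aestronglyMeasurable.mul (Lp.aestronglyMeasurable φ)) ?_
  filter_upwards [hgb] with x hx
  calc ‖g x * φ x‖ = ‖g x‖ * ‖φ x‖ := norm_mul _ _
  _ ≤ 1 * ‖φ x‖ := by gcongr
  _ = ‖φ x‖ := one_mul _

/-- Multiplication by a bounded measurable function as a bounded operator on L². -/
noncomputable def mulOpL2 (g : X → ℂ) (hg : Measurable g) (hgb : ∀ᵐ x ∂μ, ‖g x‖ ≤ 1) :
    Lp ℂ 2 μ →L[ℂ] Lp ℂ 2 μ := by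
  refine LinearMap.mkContinuous
    { toFun := fun φ => (memMul μ g hg hgb φ).toLp _
      map_add' := ?_
      map_smul' := ?_ } 1 ?_
  · intro φ ψ
    apply Lp.ext
    filter_upwards [MemLp.coeFn_toLp (memMul μ g hg hgb (φ + ψ)),
      MemLp.coeFn_toLp (memMul μ g hg hgb φ), MemLp.coeFn_toLp (memMul μ g hg hgb ψ),
      Lp.coeFn_add φ ψ,
      Lp.coeFn_add ((memMul μ g hg hgb φ).toLp _) ((memMul μ g hg hgb ψ).toLp _)]
      with x h1 h2 h3 h4 h5
    simp only [h1, h5, Pi.add_apply, h2, h3, h4, mul_add]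
  · intro c φ
    apply Lp.ext
    filter_upwards [MemLp.coeFn_toLp (memMul μ g hg hgb (c • φ)),
      MemLp.coeFn_toLp (memMul μ g hg hgb φ), Lp.coeFn_smul c φ,
      Lp.coeFn_smul c ((memMul μ g hg hgb φ).toLp _)] with x h1 h2 h3 h4
    simp only [RingHom.id_apply, h1, h4, Pi.smul_apply, h2, h3, smul_eq_mul]
    ring
  · intro φ
    rw [one_mul]
    show ‖(memMul μ g hg hgb φ).toLp _‖ ≤ _
    rw [Lp.norm_toLp _ (memMul μ g hg hgb φ)]
    have hb : eLpNorm (fun x => g x * φ x) 2 μ ≤ eLpNorm (⇑φ) 2 μ := by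
      refine eLpNorm_mono_ae ?_
      filter_upwards [hgb] with x hx
      calc ‖g x * φ x‖ = ‖g x‖ * ‖φ x‖ := norm_mul _ _
      _ ≤ 1 * ‖φ x‖ := by gcongr
      _ = ‖φ x‖ := one_mul _
    rw [Lp.norm_def]
    exact ENNReal.toReal_mono (Lp.eLpNorm_ne_top φ) hb

lemma mulOpL2_apply (g : X → ℂ) (hg : Measurable g) (hgb : ∀ᵐ x ∂μ, ‖g x‖ ≤ 1)
    (φ : Lp ℂ 2 μ) : ⇑(mulOpL2 μ g hg hgb φ) =ᵐ[μ] fun x => g x * φ x :=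
  MemLp.coeFn_toLp (memMul μ g hg hgb φ)

end MulOp

/-- Let `(X,μ)` be a finite measure space with `L²(X,μ)` separable, endowed with a right
action `β` of a group `S` with quasi-invariant measure (densities `j(·,s)`), let `a(·,s)`
be a unit-circle-valued scalar cocycle and `π_a` the associated unitary representation on
`L²(X,μ)`, and let `S₀ = {s ∈ S : x.s = x for a.e. x}`. If the linear span of
`{a(·,s) : s ∈ S₀}` is weak-* dense in `L^∞(X,μ)` (expressed, via Hahn–Banach and the
duality `L^∞ = (L¹)^*`, as: every `ψ ∈ L¹(X,μ)` with `∫ a(·,s) ψ dμ = 0` for all `s ∈ S₀`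
vanishes a.e.), then the following are equivalent: (i) the action of `S` on `(X,μ)` is
ergodic; (ii) the representation `π_a` is irreducible, i.e. every bounded operator on
`L²(X,μ)` commuting with all `π_a(s)`, `s ∈ S`, is a scalar multiple of the identity. -/
theorem stmt9 {X : Type*} [MeasurableSpace X] (μ : Measure X) [IsFiniteMeasure μ]
    [TopologicalSpace.SeparableSpace (Lp ℂ 2 μ)]
    {S : Type*} [Group S] (β : S → X → X)
    (hβmeas : ∀ s, Measurable (β s))
    (hβone : ∀ x, β 1 x = x)
    (hβmul : ∀ s₁ s₂ : S, ∀ x, β (s₁ * s₂) x = β s₂ (β s₁ x))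
    (j : X → S → ℝ)
    (hjmeas : ∀ s, Measurable fun x => j x s)
    (hjpos : ∀ s, ∀ᵐ x ∂μ, 0 < j x s)
    (hquasi : ∀ s, ∀ E : Set X, MeasurableSet E →
      μ (β s '' E) = ∫⁻ x in E, ENNReal.ofReal (j x s) ∂μ)
    (a : X → S → ℂ)
    (hameas : ∀ s, Measurable fun x => a x s)
    (haunit : ∀ s, ∀ᵐ x ∂μ, ‖a x s‖ = 1)
    (hacoc : ∀ s₁ s₂ : S, ∀ᵐ x ∂μ, a x (s₁ * s₂) = a x s₁ * a (β s₁ x) s₂)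
    (haone : ∀ᵐ x ∂μ, a x 1 = 1)
    (π : S → Lp ℂ 2 μ →L[ℂ] Lp ℂ 2 μ)
    (hπ : ∀ s (φ : Lp ℂ 2 μ), ⇑(π s φ) =ᵐ[μ]
      fun x => (Real.sqrt (j x s) : ℂ) * a x s * φ (β s x))
    -- weak-* density of the span of `{a(·,s) : s ∈ S₀}` in `L^∞(X,μ)`:
    (hdense : ∀ ψ : X → ℂ, Integrable ψ μ →
      (∀ s : S, (∀ᵐ x ∂μ, β s x = x) → ∫ x, a x s * ψ x ∂μ = 0) → ψ =ᵐ[μ] 0) :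
    ((∀ A : Set X, MeasurableSet A → (∀ s : S, μ (A ∆ (β s '' A)) = 0) →
        μ A = 0 ∨ μ Aᶜ = 0) ↔
      (∀ T : Lp ℂ 2 μ →L[ℂ] Lp ℂ 2 μ,
        (∀ s : S, T.comp (π s) = (π s).comp T) →
        ∃ c : ℂ, T = c • ContinuousLinearMap.id ℂ (Lp ℂ 2 μ))) := by
  have himg : ∀ (s : S) (A : Set X), β s '' A = β s⁻¹ ⁻¹' A :=
    beta_image_eq_preimage hβone hβmul
  have haecomp : ∀ (s : S) {p : X → Prop}, (∀ᵐ x ∂μ, p x) → ∀ᵐ x ∂μ, p (β s x) :=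
    fun s p hp => ae_comp_beta hβone hβmul hquasi s hp
  constructor
  · -- ergodic → irreducible
    intro herg T hT
    classical
    have hjone : ∀ s : S, (∀ᵐ x ∂μ, β s x = x) → ∀ᵐ x ∂μ, j x s = 1 := by
      intro s hs
      have hmeasEq : ∀ E : Set X, MeasurableSet E → μ (β s '' E) = μ E := by
        intro E hE
        set N := toMeasurable μ {x | ¬ β s x = x} with hN
        have hNmeas : MeasurableSet N := measurableSet_toMeasurable μ _
        have hN0 : μ N = 0 := by
          rw [measure_toMeasurable]; exact hs
        apply le_antisymm
        · have h1 : β s '' E ⊆ E ∪ β s '' (E ∩ N) := by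
            rintro _ ⟨x, hx, rfl⟩
            by_cases hxN : x ∈ N
            · exact Or.inr ⟨x, ⟨hx, hxN⟩, rfl⟩
            · have hfix : β s x = x := by
                by_contra hne
                exact hxN (subset_toMeasurable μ _ hne)
              rw [hfix]; exact Or.inl hx
          have h2 : μ (β s '' (E ∩ N)) = 0 := by
            rw [hquasi s _ (hE.inter hNmeas)]
            exact setLIntegral_measure_zero _ _
              (measure_mono_null Set.inter_subset_right hN0)
          calc μ (β s '' E) ≤ μ (E ∪ β s '' (E ∩ N)) := measure_mono h1
          _ ≤ μ E + μ (β s '' (E ∩ N)) := measure_union_le _ _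
          _ = μ E := by rw [h2, add_zero]
        · have h1 : E ⊆ β s '' E ∪ N := by
            intro x hx
            by_cases hxN : x ∈ N
            · exact Or.inr hxN
            · have hfix : β s x = x := by
                by_contra hne
                exact hxN (subset_toMeasurable μ _ hne)
              exact Or.inl ⟨x, hx, hfix⟩
          calc μ E ≤ μ (β s '' E ∪ N) := measure_mono h1
          _ ≤ μ (β s '' E) + μ N := measure_union_le _ _
          _ = μ (β s '' E) := by rw [hN0, add_zero]
      have heq : (fun x => ENNReal.ofReal (j x s)) =ᵐ[μ] (fun _ => (1:ℝ≥0∞)) := by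
        refine ae_eq_of_forall_setLIntegral_eq_of_sigmaFinite
          (ENNReal.measurable_ofReal.comp (hjmeas s)) measurable_const ?_
        intro E hE _
        rw [← hquasi s E hE, hmeasEq E hE, setLIntegral_one]
      filter_upwards [heq] with x hx
      exact ENNReal.ofReal_eq_one.mp hx
    have hπ0 : ∀ s : S, (∀ᵐ x ∂μ, β s x = x) →
        ∀ φ : Lp ℂ 2 μ, ⇑(π s φ) =ᵐ[μ] fun x => a x s * φ x := by
      intro s hs φ
      filter_upwards [hπ s φ, hs, hjone s hs] with x h1 h2 h3
      rw [h1, h2, h3, Real.sqrt_one]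
      push_cast
      ring
    set Tadj := ContinuousLinearMap.adjoint T with hTadjdef
    set one : Lp ℂ 2 μ := Lp.const 2 μ (1:ℂ) with honedef
    have hone : ⇑one =ᵐ[μ] Function.const X (1:ℂ) := Lp.coeFn_const 2 μ (1:ℂ)
    have hmul : ∀ φ χ : Lp ℂ 2 μ, ∀ᵐ x ∂μ,
        φ x * (starRingEnd ℂ) ((Tadj χ) x) = (T φ) x * (starRingEnd ℂ) (χ x) := by
      intro φ χ
      set w : Lp ℂ 2 μ := Tadj χ with hwdef
      have hψint : Integrable
          (fun x => φ x * (starRingEnd ℂ) (w x) - (T φ) x * (starRingEnd ℂ) (χ x)) μ := by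
        refine Integrable.sub ?_ ?_
        · refine (L2.integrable_inner (𝕜 := ℂ) w φ).congr ?_
          refine Filter.Eventually.of_forall fun x => ?_
          simp [RCLike.inner_apply, mul_comm]
        · refine (L2.integrable_inner (𝕜 := ℂ) χ (T φ)).congr ?_
          refine Filter.Eventually.of_forall fun x => ?_
          simp [RCLike.inner_apply, mul_comm]
      have hzero : ∀ s : S, (∀ᵐ x ∂μ, β s x = x) →
          ∫ x, a x s * (φ x * (starRingEnd ℂ) (w x)
            - (T φ) x * (starRingEnd ℂ) (χ x)) ∂μ = 0 := by
        intro s hs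
        have int1 : Integrable (fun x => (starRingEnd ℂ) (w x) * (a x s * φ x)) μ := by
          refine (L2.integrable_inner (𝕜 := ℂ) w (π s φ)).congr ?_
          filter_upwards [hπ0 s hs φ] with x hx
          simp [RCLike.inner_apply', hx]
          ring
        have int2 : Integrable (fun x => (starRingEnd ℂ) (χ x) * (a x s * (T φ) x)) μ := by
          refine (L2.integrable_inner (𝕜 := ℂ) χ (π s (T φ))).congr ?_
          filter_upwards [hπ0 s hs (T φ)] with x hx
          simp [RCLike.inner_apply', hx]
          ring
        have e1 : (inner ℂ w (π s φ) : ℂ) = ∫ x, (starRingEnd ℂ) (w x) * (a x s * φ x) ∂μ := by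
          rw [L2.inner_def]
          refine integral_congr_ae ?_
          filter_upwards [hπ0 s hs φ] with x hx
          rw [RCLike.inner_apply', hx]
        have e4 : (inner ℂ χ (π s (T φ)) : ℂ)
            = ∫ x, (starRingEnd ℂ) (χ x) * (a x s * (T φ) x) ∂μ := by
          rw [L2.inner_def]
          refine integral_congr_ae ?_
          filter_upwards [hπ0 s hs (T φ)] with x hx
          rw [RCLike.inner_apply', hx]
        have e2 : (inner ℂ w (π s φ) : ℂ) = inner ℂ χ (T (π s φ)) :=
          ContinuousLinearMap.adjoint_inner_left T (π s φ) χ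
        have e3 : T (π s φ) = π s (T φ) := by
          have := ContinuousLinearMap.ext_iff.mp (hT s) φ
          simpa using this
        have key : ∫ x, (starRingEnd ℂ) (w x) * (a x s * φ x) ∂μ
            = ∫ x, (starRingEnd ℂ) (χ x) * (a x s * (T φ) x) ∂μ := by
          rw [← e1, ← e4, e2, e3]
        have hsplit : ∫ x, a x s * (φ x * (starRingEnd ℂ) (w x)
              - (T φ) x * (starRingEnd ℂ) (χ x)) ∂μ
            = (∫ x, (starRingEnd ℂ) (w x) * (a x s * φ x) ∂μ)
              - ∫ x, (starRingEnd ℂ) (χ x) * (a x s * (T φ) x) ∂μ := by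
          rw [← integral_sub int1 int2]
          refine integral_congr_ae (Filter.Eventually.of_forall fun x => ?_)
          ring
        rw [hsplit, key, sub_self]
      have := hdense _ hψint hzero
      filter_upwards [this] with x hx
      exact sub_eq_zero.mp hx
    set k : X → ℂ := fun x => (starRingEnd ℂ) ((Tadj one) x) with hkdef
    have hTφ : ∀ φ : Lp ℂ 2 μ, ⇑(T φ) =ᵐ[μ] fun x => k x * φ x := by
      intro φ
      filter_upwards [hmul φ one, hone] with x h1 h2
      rw [h2] at h1
      simp only [Function.const_apply, map_one, mul_one] at h1
      rw [← h1, hkdef]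
      ring
    have hkinv : ∀ s : S, ∀ᵐ x ∂μ, k (β s x) = k x := by
      intro s
      have heq : T (π s one) = π s (T one) := by
        have := ContinuousLinearMap.ext_iff.mp (hT s) one
        simpa using this
      have l1 : ⇑(T (π s one)) =ᵐ[μ] fun x => k x * (π s one) x := hTφ _
      have l4 : ∀ᵐ x ∂μ, (T one) (β s x) = k (β s x) * one (β s x) :=
        haecomp s (hTφ one)
      have l5 : ∀ᵐ x ∂μ, one (β s x) = 1 := by
        refine haecomp s (p := fun y => (one : X → ℂ) y = 1) ?_
        filter_upwards [hone] with x hx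
        simpa using hx
      have hcoeEq : ∀ᵐ x ∂μ, (T (π s one)) x = (π s (T one)) x := by
        rw [heq]
        exact Filter.Eventually.of_forall fun x => rfl
      filter_upwards [l1, hπ s one, hπ s (T one), l4, l5, hjpos s, haunit s,
        hcoeEq] with x e1 e2 e3 e4 e5 e6 e7 e8
      rw [e1, e2, e3, e4, e5] at e8
      have hane : a x s ≠ 0 := by
        intro h0
        rw [h0] at e7
        simp at e7
      have hsne : ((Real.sqrt (j x s) : ℝ) : ℂ) ≠ 0 := by
        simp only [ne_eq, Complex.ofReal_eq_zero]
        exact ne_of_gt (Real.sqrt_pos.mpr e6)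
      have main : (((Real.sqrt (j x s) : ℝ) : ℂ) * a x s) * k x
          = (((Real.sqrt (j x s) : ℝ) : ℂ) * a x s) * k (β s x) := by
        linear_combination e8
      exact (mul_left_cancel₀ (mul_ne_zero hsne hane) main).symm
    -- measurable representative of k
    have hkaesm : AEStronglyMeasurable k μ := by
      have h := Lp.aestronglyMeasurable (Tadj one)
      exact RCLike.continuous_conj.comp_aestronglyMeasurable h
    set k₀ : X → ℂ := hkaesm.mk k with hk₀def
    have hk₀meas : Measurable k₀ := hkaesm.stronglyMeasurable_mk.measurable
    have hk₀eq : k =ᵐ[μ] k₀ := hkaesm.ae_eq_mk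
    have hk₀inv : ∀ s : S, ∀ᵐ x ∂μ, k₀ (β s x) = k₀ x := by
      intro s
      have h1 : ∀ᵐ x ∂μ, k (β s x) = k₀ (β s x) :=
        haecomp s (p := fun y => k y = k₀ y) hk₀eq
      filter_upwards [hkinv s, hk₀eq, h1] with x e1 e2 e3
      rw [← e3, e1, e2]
    have hlevel : ∀ u : X → ℝ, Measurable u → (∀ s : S, ∀ᵐ x ∂μ, u (β s x) = u x) →
        ∀ q : ℝ, μ {x | u x < q} = 0 ∨ μ {x | u x < q}ᶜ = 0 := by
      intro u hu huinv q
      refine herg {x | u x < q} (measurableSet_lt hu measurable_const) ?_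
      intro s
      rw [himg s _]
      have h0 : μ {x | ¬ u (β s⁻¹ x) = u x} = 0 := ae_iff.mp (huinv s⁻¹)
      refine measure_mono_null ?_ h0
      intro x hx
      rw [Set.mem_symmDiff] at hx
      simp only [Set.mem_setOf_eq, Set.mem_preimage] at hx ⊢
      rcases hx with ⟨h1, h2⟩ | ⟨h1, h2⟩ <;> intro heq
      · exact h2 (heq ▸ h1)
      · exact h2 (heq ▸ h1)
    have hconst : ∃ c : ℂ, ∀ᵐ x ∂μ, k₀ x = c := by
      by_cases hμ0 : μ Set.univ = 0
      · refine ⟨0, ?_⟩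
        have : μ {x | ¬ k₀ x = 0} = 0 :=
          measure_mono_null (Set.subset_univ _) hμ0
        exact this
      · obtain ⟨cr, hcr⟩ := constant_of_levels μ hμ0 (fun x => (k₀ x).re)
          (hlevel _ (Complex.measurable_re.comp hk₀meas)
            (fun s => by
              filter_upwards [hk₀inv s] with x hx
              rw [hx]))
        obtain ⟨ci, hci⟩ := constant_of_levels μ hμ0 (fun x => (k₀ x).im)
          (hlevel _ (Complex.measurable_im.comp hk₀meas)
            (fun s => by
              filter_upwards [hk₀inv s] with x hx
              rw [hx]))
        refine ⟨Complex.mk cr ci, ?_⟩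
        filter_upwards [hcr, hci] with x h1 h2
        exact Complex.ext h1 h2
    obtain ⟨c, hkc⟩ := hconst
    refine ⟨c, ?_⟩
    refine ContinuousLinearMap.ext fun φ => ?_
    apply Lp.ext
    have hsm : ⇑(c • φ) =ᵐ[μ] c • ⇑φ := Lp.coeFn_smul c φ
    show ⇑(T φ) =ᵐ[μ] ⇑((c • ContinuousLinearMap.id ℂ (Lp ℂ 2 μ)) φ)
    have hidapp : (c • ContinuousLinearMap.id ℂ (Lp ℂ 2 μ)) φ = c • φ := rfl
    rw [hidapp]
    filter_upwards [hTφ φ, hk₀eq, hkc, hsm] with x e1 e2 e3 e4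
    rw [e1, e2, e3, e4]
    simp [smul_eq_mul]
  · -- irreducible → ergodic
    intro hirr A hA hinv
    by_contra hcon
    push_neg at hcon
    obtain ⟨hA0, hAc0⟩ := hcon
    set g : X → ℂ := A.indicator (fun _ => (1:ℂ)) with hgdef
    have hgmeas : Measurable g := measurable_const.indicator hA
    have hgb : ∀ᵐ x ∂μ, ‖g x‖ ≤ 1 := Filter.Eventually.of_forall (fun x => by
      by_cases hx : x ∈ A <;> simp [hgdef, Set.indicator_apply, hx])
    set T := mulOpL2 μ g hgmeas hgb with hTdef
    have hginv : ∀ s : S, ∀ᵐ x ∂μ, g (β s x) = g x := by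
      intro s
      have h2 : μ (A ∆ (β s ⁻¹' A)) = 0 := by
        have := hinv s⁻¹
        rwa [himg s⁻¹ A, inv_inv] at this
      refine measure_mono_null ?_ h2
      intro x hx
      simp only [Set.mem_setOf_eq] at hx
      rw [Set.mem_symmDiff]
      by_cases hxA : x ∈ A <;> by_cases hxB : β s x ∈ A
      · exact absurd (by simp [hgdef, Set.indicator_apply, hxA, hxB]) hx
      · exact Or.inl ⟨hxA, hxB⟩
      · exact Or.inr ⟨hxB, hxA⟩
      · exact absurd (by simp [hgdef, Set.indicator_apply, hxA, hxB]) hx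
    have hcomm : ∀ s : S, T.comp (π s) = (π s).comp T := by
      intro s
      refine ContinuousLinearMap.ext fun φ => ?_
      show T (π s φ) = (π s) (T φ)
      apply Lp.ext
      have h4 : ∀ᵐ x ∂μ, (T φ) (β s x) = g (β s x) * φ (β s x) :=
        haecomp s (mulOpL2_apply μ g hgmeas hgb φ)
      filter_upwards [mulOpL2_apply μ g hgmeas hgb (π s φ), hπ s φ, hπ s (T φ),
        h4, hginv s] with x e1 e2 e3 e4 e5
      rw [e1, e2, e3, e4, e5]
      ring
    obtain ⟨c, hc⟩ := hirr T hcomm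
    set one : Lp ℂ 2 μ := Lp.const 2 μ (1:ℂ) with honedef
    have hTone : T one = c • one := by rw [hc]; rfl
    have hgc : ∀ᵐ x ∂μ, g x = c := by
      have h1 : ⇑(T one) =ᵐ[μ] fun x => g x * one x := mulOpL2_apply μ g hgmeas hgb one
      have h2 : ⇑(c • one) =ᵐ[μ] c • ⇑one := Lp.coeFn_smul c one
      have h3 : ⇑one =ᵐ[μ] Function.const X (1:ℂ) := Lp.coeFn_const 2 μ (1:ℂ)
      filter_upwards [h1, h2, h3] with x e1 e2 e3
      have h5 := congrArg (fun (f : Lp ℂ 2 μ) => (f : X → ℂ) x) hTone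
      rw [e1, e2] at h5
      simp only [e3, Function.const_apply, mul_one, Pi.smul_apply, smul_eq_mul] at h5
      exact h5
    have hgne : μ {x | ¬ g x = c} = 0 := ae_iff.mp hgc
    have hc1 : c = 1 := by
      have h1 : μ (A ∩ {x | g x = c}) ≠ 0 := by
        intro h0
        apply hA0
        refine measure_mono_null (fun x hx => ?_) (measure_union_null h0 hgne)
        by_cases hgx : g x = c
        · exact Or.inl ⟨hx, hgx⟩
        · exact Or.inr hgx
      obtain ⟨x, hxA, hxg⟩ := nonempty_of_measure_ne_zero h1
      rw [← hxg]
      simp [hgdef, Set.indicator_apply, hxA]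
    have hc0 : c = 0 := by
      have h1 : μ (Aᶜ ∩ {x | g x = c}) ≠ 0 := by
        intro h0
        apply hAc0
        refine measure_mono_null (fun x hx => ?_) (measure_union_null h0 hgne)
        by_cases hgx : g x = c
        · exact Or.inl ⟨hx, hgx⟩
        · exact Or.inr hgx
      obtain ⟨x, hxA, hxg⟩ := nonempty_of_measure_ne_zero h1
      rw [← hxg]
      simp only [Set.mem_compl_iff] at hxA
      simp [hgdef, Set.indicator_apply, hxA]
    rw [hc1] at hc0
    exact one_ne_zero hc0
end
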